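/- Let k ≥ 2, a : Fin k → ℝ, m : ℝ, and let ω : Fin k → ℝ be a weight vector. If the generalized operator annihilates the second weighted isobaric polynomial, i.e. T_{a,m}(P_{2,ω}) = 0 where P_{2,ω} = ω₁·t₁² + ω₂·t₂, then m·ω₂ = 2·ω₁. -/

import Mathlib

open MvPolynomial Finset

/-- The weight coefficient `A_ω(α)` of Theorem 2.1 (for `α ≠ 0`):
`A_ω(α) = multinomial(α) · (Σ α_i ω_i) / (Σ α_i)`. -/
noncomputable def Aw {k : ℕ} (ω : Fin k → ℝ) (α : Fin k → ℕ) : ℝ :=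
  (Nat.multinomial Finset.univ α : ℝ) * (∑ i, (α i : ℝ) * ω i) / (∑ i, (α i : ℝ))

/-- The isobaric degree `Σ_{i=1}^k i·α_i` of an exponent vector. -/
def isoDeg {k : ℕ} (α : Fin k → ℕ) : ℕ := ∑ i, (i.1 + 1) * α i

/-- The (finite) set of exponent vectors of isobaric degree `n`. -/
def wipIndex (k n : ℕ) : Finset (Fin k → ℕ) :=
  (Fintype.piFinset fun _ : Fin k => Finset.range (n + 1)).filter fun α => isoDeg α = n

/-- The weighted isobaric polynomial `P_{n,ω} = Σ_α A_ω(α)·t^α`. -/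
noncomputable def WIP (k n : ℕ) (ω : Fin k → ℝ) : MvPolynomial (Fin k) ℝ :=
  ∑ α ∈ wipIndex k n, MvPolynomial.monomial (Finsupp.equivFunOnFinite.symm α) (Aw ω α)

/-- The operator `T_m(P) = D₁₁P − Σ_j t_j D_{2j}P − m·D₂P`. -/
noncomputable def Tm (k : ℕ) (hk : 2 ≤ k) (m : ℝ) (P : MvPolynomial (Fin k) ℝ) :
    MvPolynomial (Fin k) ℝ :=
  pderiv (⟨0, by omega⟩ : Fin k) (pderiv (⟨0, by omega⟩ : Fin k) P)
    - ∑ j : Fin k, X j * pderiv (⟨1, by omega⟩ : Fin k) (pderiv j P)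
    - C m * pderiv (⟨1, by omega⟩ : Fin k) P

/-- The `j`-th element `γ^{(j)}` of the string generated by `γ`. -/
def strElem (k : ℕ) (hk : 2 ≤ k) (γ : Fin k → ℕ) (j : ℕ) : Fin k → ℕ :=
  fun i => if i = (⟨0, by omega⟩ : Fin k) then γ i + 2 * j
    else if i = (⟨1, by omega⟩ : Fin k) then γ i - j else γ i

/-- The `ω`-weighted string generated by `γ`:
`S_ω(γ) = Σ_{j=0}^{γ₂} A_ω(γ^{(j)})·t^{γ^{(j)}}`. -/
noncomputable def strPoly (k : ℕ) (hk : 2 ≤ k) (ω : Fin k → ℝ) (γ : Fin k → ℕ) :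
    MvPolynomial (Fin k) ℝ :=
  ∑ j ∈ Finset.range (γ (⟨1, by omega⟩ : Fin k) + 1),
    MvPolynomial.monomial (Finsupp.equivFunOnFinite.symm (strElem k hk γ j))
      (Aw ω (strElem k hk γ j))

/-- The generalized operator `T_{a,m}(P) = D₁₁P − Σ_j a_j t_j D_{2j}P − m·D₂P`. -/
noncomputable def Tam (k : ℕ) (hk : 2 ≤ k) (a : Fin k → ℝ) (m : ℝ)
    (P : MvPolynomial (Fin k) ℝ) : MvPolynomial (Fin k) ℝ :=
  pderiv (⟨0, by omega⟩ : Fin k) (pderiv (⟨0, by omega⟩ : Fin k) P)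
    - ∑ j : Fin k, C (a j) * X j * pderiv (⟨1, by omega⟩ : Fin k) (pderiv j P)
    - C m * pderiv (⟨1, by omega⟩ : Fin k) P


section Aux
variable {k : ℕ}

lemma multinomial_ite (c : Fin k) (v : ℕ) :
    Nat.multinomial Finset.univ (fun i => if i = c then v else 0) = 1 := by
  have hspec := Nat.multinomial_spec (s := (Finset.univ : Finset (Fin k)))
    (f := fun i => if i = c then v else 0)
  have h1 : (∏ i : Fin k, (Nat.factorial (if i = c then v else 0))) = Nat.factorial v := by
    rw [Finset.prod_eq_single c] <;> simp +contextual
  have h2 : (∑ i : Fin k, (if i = c then v else 0)) = v := by simp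
  rw [h1, h2] at hspec
  have hpos := Nat.factorial_pos v
  exact Nat.eq_of_mul_eq_mul_left hpos (by rw [hspec, mul_one])

lemma Aw_ite (ω : Fin k → ℝ) (c : Fin k) (v : ℕ) (hv : 0 < v) :
    Aw ω (fun i => if i = c then v else 0) = ω c := by
  rw [Aw, multinomial_ite]
  have h2 : (∑ i : Fin k, ((if i = c then v else 0 : ℕ) : ℝ)) = (v : ℝ) := by
    simp
  have h3 : (∑ i : Fin k, ((if i = c then v else 0 : ℕ) : ℝ) * ω i) = (v : ℝ) * ω c := by
    rw [Finset.sum_eq_single c] <;> simp +contextual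
  rw [h2, h3]
  have : (v : ℝ) ≠ 0 := by positivity
  field_simp
  simp

end Aux

section Main
variable (k : ℕ) (hk : 2 ≤ k)

def i0 : Fin k := ⟨0, by omega⟩
def i1 : Fin k := ⟨1, by omega⟩

lemma i0_ne_i1 : i0 k hk ≠ i1 k hk := by simp [i0, i1, Fin.ext_iff]

lemma wipIndex_two :
    wipIndex k 2 = {fun i => if i = i0 k hk then 2 else 0,
                    fun i => if i = i1 k hk then 1 else 0} := by
  ext α
  simp only [wipIndex, Finset.mem_filter, Fintype.mem_piFinset, Finset.mem_range,
    Finset.mem_insert, Finset.mem_singleton]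
  constructor
  · rintro ⟨-, hdeg⟩
    rw [isoDeg] at hdeg
    have hle : ∀ i : Fin k, (i.1 + 1) * α i ≤ 2 := by
      intro i
      rw [← hdeg]
      exact Finset.single_le_sum (f := fun j : Fin k => (j.1 + 1) * α j)
        (fun j _ => Nat.zero_le _) (Finset.mem_univ i)
    have hzero : ∀ i : Fin k, 2 ≤ i.1 → α i = 0 := by
      intro i hi
      have := hle i
      nlinarith [this]
    have hpair : α (i0 k hk) + 2 * α (i1 k hk) = 2 := by
      have : ∑ i ∈ ({i0 k hk, i1 k hk} : Finset (Fin k)), (i.1 + 1) * α i = 2 := by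
        rw [← hdeg]
        refine Finset.sum_subset (Finset.subset_univ _) ?_
        intro i _ hi
        simp only [Finset.mem_insert, Finset.mem_singleton, not_or] at hi
        have h2 : 2 ≤ i.1 := by
          rcases hi with ⟨h1, h2⟩
          simp only [i0, i1, Fin.ext_iff] at h1 h2
          omega
        rw [hzero i h2, mul_zero]
      rw [Finset.sum_pair (i0_ne_i1 k hk)] at this
      simp only [i0, i1] at this ⊢
      omega
    have hcase : (α (i0 k hk) = 2 ∧ α (i1 k hk) = 0) ∨
        (α (i0 k hk) = 0 ∧ α (i1 k hk) = 1) := by omega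
    rcases hcase with ⟨h1, h2⟩ | ⟨h1, h2⟩
    · left
      funext i
      by_cases hi : i = i0 k hk
      · simp [hi, h1]
      · rw [if_neg hi]
        by_cases hi' : i = i1 k hk
        · rw [hi']; exact h2
        · refine hzero i ?_
          simp only [i0, i1, Fin.ext_iff] at hi hi'
          omega
    · right
      funext i
      by_cases hi' : i = i1 k hk
      · simp [hi', h2]
      · rw [if_neg hi']
        by_cases hi : i = i0 k hk
        · rw [hi]; exact h1
        · refine hzero i ?_
          simp only [i0, i1, Fin.ext_iff] at hi hi'
          omega
  · rintro (rfl | rfl)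
    · refine ⟨fun i => ?_, ?_⟩
      · dsimp only; split <;> omega
      · rw [isoDeg, Finset.sum_eq_single (i0 k hk)]
        · simp [i0]
        · intro b _ hb; simp [hb]
        · simp
    · refine ⟨fun i => ?_, ?_⟩
      · dsimp only; split <;> omega
      · rw [isoDeg, Finset.sum_eq_single (i1 k hk)]
        · simp [i1]
        · intro b _ hb; simp [hb]
        · simp

end Main

lemma pderiv_two {k : ℕ} (i : Fin k) : pderiv i (2 : MvPolynomial (Fin k) ℝ) = 0 := by
  rw [← map_ofNat (C : ℝ →+* MvPolynomial (Fin k) ℝ) 2, pderiv_C]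

lemma pderiv_ite01 {k : ℕ} (i : Fin k) (c : Prop) [Decidable c] :
    pderiv i (if c then (1 : MvPolynomial (Fin k) ℝ) else 0) = 0 := by
  split <;> simp [pderiv_one]

lemma symm_ite {k : ℕ} (c : Fin k) (v : ℕ) :
    Finsupp.equivFunOnFinite.symm (fun i => if i = c then v else 0) = Finsupp.single c v := by
  ext i
  simp [Finsupp.single_apply, eq_comm]

lemma WIP_two (k : ℕ) (hk : 2 ≤ k) (ω : Fin k → ℝ) :
    WIP k 2 ω = C (ω (i0 k hk)) * X (i0 k hk) ^ 2 + C (ω (i1 k hk)) * X (i1 k hk) := by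
  have hne : (fun i => if i = i0 k hk then 2 else 0) ≠
      (fun i => if i = i1 k hk then 1 else 0) := by
    intro heq
    have := congrFun heq (i0 k hk)
    simp [i0_ne_i1 k hk] at this
  rw [WIP, wipIndex_two k hk, Finset.sum_pair hne, symm_ite, symm_ite,
    Aw_ite ω (i0 k hk) 2 (by omega), Aw_ite ω (i1 k hk) 1 (by omega)]
  simp [X, monomial_pow, Finsupp.smul_single, C_mul_monomial]

/-- Lemma 4.7: if the generalized operator annihilates `P_{2,ω} = ω₁t₁² + ω₂t₂`,
then `m·ω₂ = 2·ω₁`. -/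
theorem second_term_condition (k : ℕ) (hk : 2 ≤ k) (a : Fin k → ℝ) (m : ℝ)
    (ω : Fin k → ℝ) (h : Tam k hk a m (WIP k 2 ω) = 0) :
    m * ω (⟨1, by omega⟩ : Fin k) = 2 * ω (⟨0, by omega⟩ : Fin k) := by
  rw [Tam, WIP_two k hk ω] at h
  simp only [i0, i1, map_add, pderiv_C_mul, pderiv_pow, pderiv_X_self, pderiv_X,
    pderiv_C, pderiv_mul, Pi.single_apply, Fin.mk.injEq, zero_ne_one, one_ne_zero,
    ite_true, ite_false, mul_one, mul_zero, zero_mul, one_mul, add_zero, zero_add,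
    pow_one, map_zero, Nat.cast_ofNat, pderiv_ite01, pderiv_two, pow_zero,
    Nat.cast_one, ite_self, Finset.sum_const_zero, sub_zero, Nat.sub_self] at h
  norm_num at h
  have h2 := congrArg MvPolynomial.constantCoeff h
  simp [map_ofNat] at h2
  linarith
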